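/- Let d ∈ (0, 1/2), L > 0, and q a natural number. Let Λ : ℝ → ℝ be integrable with support contained in [−L, L] and such that ∫_ℝ h^m Λ(h) dh = 0 for every natural number m < q. Then there exists a constant C > 0 such that for every real α with |α| ≥ 2L, one has |∫_ℝ |h + α|^{2d−1} Λ(h) dh| ≤ C · |α|^{2d−1−q}. -/

import Mathlib

open MeasureTheory

/-- Iterated derivative (within `Icc a b`) of a shifted real power. -/
lemma iterDeriv_shift_rpow (p c a b : ℝ) (hab : a < b)
    (hpos : ∀ y ∈ Set.Icc a b, 0 < y + c) (n : ℕ) :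
    ∀ y ∈ Set.Icc a b,
      iteratedDerivWithin n (fun x => (x + c) ^ p) (Set.Icc a b) y
        = (∏ i ∈ Finset.range n, (p - i)) * (y + c) ^ (p - n) := by
  induction n with
  | zero => intro y hy; simp
  | succ n ih =>
    intro y hy
    rw [iteratedDerivWithin_succ]
    rw [derivWithin_congr ih (ih y hy)]
    have h1 : HasDerivAt (fun x : ℝ => x + c) 1 y := (hasDerivAt_id y).add_const c
    have h2 : HasDerivAt (fun x : ℝ => (x + c) ^ (p - n))
        (1 * (p - n) * (y + c) ^ (p - n - 1)) y :=
      h1.rpow_const (Or.inl (ne_of_gt (hpos y hy)))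
    have h3 : HasDerivAt (fun x : ℝ => (∏ i ∈ Finset.range n, (p - i)) * (x + c) ^ (p - n))
        ((∏ i ∈ Finset.range n, (p - i)) * (1 * (p - n) * (y + c) ^ (p - n - 1))) y :=
      h2.const_mul _
    rw [h3.hasDerivWithinAt.derivWithin ((uniqueDiffOn_Icc hab) y hy)]
    rw [Finset.prod_range_succ]
    have he : p - ((n : ℕ) + 1 : ℕ) = p - (n : ℝ) - 1 := by push_cast; ring
    rw [he]
    ring

/-- Core estimate for a positive shift `α ≥ 2L`. -/
lemma core_bound (p L : ℝ) (hp : p < 0) (hL : 0 < L) (q : ℕ) (Λ : ℝ → ℝ)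
    (hΛ : Integrable Λ) (hsupp : Function.support Λ ⊆ Set.Icc (-L) L)
    (hmom : ∀ m : ℕ, m < q → ∫ h : ℝ, h ^ m * Λ h = 0)
    (α : ℝ) (hα : 2 * L ≤ α) :
    |∫ h : ℝ, |h + α| ^ p * Λ h| ≤
      ((∏ i ∈ Finset.range q, (|p| + i)) * (2 * L) ^ q * 2 ^ ((q : ℝ) - p))
        * (∫ h : ℝ, |Λ h|) * α ^ (p - q) := by
  have hαpos : 0 < α := lt_of_lt_of_le (by linarith) hα
  have haL : L ≤ α - L := by linarith
  have haLpos : 0 < α - L := by linarith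
  have hposIcc : ∀ y ∈ Set.Icc (-L) L, 0 < y + α := by
    intro y hy; have := hy.1; linarith
  have hgeIcc : ∀ y ∈ Set.Icc (-L) L, α - L ≤ y + α := by
    intro y hy; have := hy.1; linarith
  have hfun : (fun h : ℝ => |h + α| ^ p * Λ h) = fun h : ℝ => (h + α) ^ p * Λ h := by
    funext h
    by_cases hh : Λ h = 0
    · simp [hh]
    · rw [abs_of_pos (hposIcc h (hsupp hh))]
  rw [hfun]
  have hintg : ∀ g : ℝ → ℝ, Continuous g → Integrable (fun h => g h * Λ h) := by
    intro g hg
    obtain ⟨B, hB⟩ :=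
      (isCompact_Icc (a := -L) (b := L)).exists_bound_of_continuousOn hg.continuousOn
    refine (hΛ.norm.const_mul B).mono'
      (hg.measurable.aestronglyMeasurable.mul hΛ.1) ?_
    filter_upwards with h
    by_cases hh : Λ h = 0
    · simp [hh]
    · rw [norm_mul]
      exact mul_le_mul_of_nonneg_right (hB h (hsupp hh)) (norm_nonneg _)
  have hmom' : ∀ k : ℕ, k < q → ∫ h : ℝ, (h + L) ^ k * Λ h = 0 := by
    intro k hk
    have hexp : (fun h : ℝ => (h + L) ^ k * Λ h)
        = fun h => ∑ m ∈ Finset.range (k + 1),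
            (h ^ m * Λ h) * (L ^ (k - m) * (k.choose m)) := by
      funext h
      rw [add_pow, Finset.sum_mul]
      exact Finset.sum_congr rfl fun m _ => by ring
    rw [hexp, integral_finset_sum]
    · refine Finset.sum_eq_zero fun m hm => ?_
      rw [integral_mul_const,
        hmom m (lt_of_le_of_lt (Nat.lt_succ_iff.mp (Finset.mem_range.mp hm)) hk), zero_mul]
    · exact fun m _ => (hintg (fun h => h ^ m) (continuous_pow m)).mul_const _
  have claim : ∃ P : ℝ → ℝ, Continuous P ∧ (∫ h : ℝ, P h * Λ h = 0) ∧
      ∀ x ∈ Set.Icc (-L) L, |(x + α) ^ p - P x| ≤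
        (∏ i ∈ Finset.range q, (|p| + i)) * (2 * L) ^ q * (α - L) ^ (p - q) := by
    rcases q with _ | n
    · refine ⟨0, continuous_const, by simp, ?_⟩
      intro x hx
      simp only [Pi.zero_apply, sub_zero, Finset.range_zero, Finset.prod_empty,
        pow_zero, Nat.cast_zero, one_mul]
      rw [abs_of_pos (Real.rpow_pos_of_pos (hposIcc x hx) p)]
      exact Real.rpow_le_rpow_of_nonpos haLpos (hgeIcc x hx) hp.le
    · set f : ℝ → ℝ := fun x => (x + α) ^ p with hf
      have hab : (-L : ℝ) < L := by linarith
      set Cp : ℝ := ∏ i ∈ Finset.range (n + 1), (|p| + i) with hCp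
      have hCpnn : 0 ≤ Cp := Finset.prod_nonneg fun i _ => by positivity
      set D : ℝ := Cp * (α - L) ^ (p - ((n + 1 : ℕ) : ℝ)) with hD
      have hDnn : 0 ≤ D := mul_nonneg hCpnn (Real.rpow_pos_of_pos haLpos _).le
      refine ⟨fun x => ∑ k ∈ Finset.range (n + 1),
        (((k.factorial : ℝ))⁻¹ * (x + L) ^ k) *
          iteratedDerivWithin k f (Set.Icc (-L) L) (-L), ?_, ?_, ?_⟩
      · exact continuous_finset_sum _ fun k _ =>
          ((continuous_const.mul ((continuous_id.add continuous_const).pow k)).mul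
            continuous_const)
      · have hexp : (fun h : ℝ => (∑ k ∈ Finset.range (n + 1),
            (((k.factorial : ℝ))⁻¹ * (h + L) ^ k) *
              iteratedDerivWithin k f (Set.Icc (-L) L) (-L)) * Λ h)
            = fun h => ∑ k ∈ Finset.range (n + 1),
              ((h + L) ^ k * Λ h) *
                (((k.factorial : ℝ))⁻¹ * iteratedDerivWithin k f (Set.Icc (-L) L) (-L)) := by
          funext h
          rw [Finset.sum_mul]
          exact Finset.sum_congr rfl fun k _ => by ring
        rw [hexp, integral_finset_sum]
        · refine Finset.sum_eq_zero fun k hk => ?_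
          rw [integral_mul_const, hmom' k (Finset.mem_range.mp hk), zero_mul]
        · exact fun k _ =>
            (hintg (fun h => (h + L) ^ k)
              ((continuous_id.add continuous_const).pow k)).mul_const _
      · intro x hx
        have hcd : ContDiffOn ℝ (n + 1) f (Set.Icc (-L) L) := by
          intro y hy
          exact (((contDiff_id.add contDiff_const).contDiffAt).rpow_const_of_ne
            (ne_of_gt (hposIcc y hy))).contDiffWithinAt
        have hC : ∀ y ∈ Set.Icc (-L) L,
            ‖iteratedDerivWithin (n + 1) f (Set.Icc (-L) L) y‖ ≤ D := by
          intro y hy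
          rw [iterDeriv_shift_rpow p α (-L) L hab hposIcc (n + 1) y hy]
          rw [Real.norm_eq_abs, abs_mul, Finset.abs_prod]
          rw [abs_of_pos (Real.rpow_pos_of_pos (hposIcc y hy) _)]
          have h1 : ∀ i ∈ Finset.range (n + 1), |p - (i : ℝ)| = |p| + i := by
            intro i _
            have hi : (0 : ℝ) ≤ (i : ℝ) := Nat.cast_nonneg i
            rw [abs_of_neg (by linarith : p - (i : ℝ) < 0), abs_of_neg hp]
            ring
          rw [Finset.prod_congr rfl h1]
          refine mul_le_mul_of_nonneg_left ?_ hCpnn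
          have hn : (0 : ℝ) ≤ (n : ℝ) := Nat.cast_nonneg n
          exact Real.rpow_le_rpow_of_nonpos haLpos (hgeIcc y hy)
            (by push_cast; linarith)
        have htay := taylor_mean_remainder_bound (le_of_lt hab) hcd hx hC
        have hPeq : taylorWithinEval f n (Set.Icc (-L) L) (-L) x
            = ∑ k ∈ Finset.range (n + 1),
              (((k.factorial : ℝ))⁻¹ * (x + L) ^ k) *
                iteratedDerivWithin k f (Set.Icc (-L) L) (-L) := by
          rw [taylor_within_apply]
          exact Finset.sum_congr rfl fun k _ => by
            rw [smul_eq_mul, sub_neg_eq_add]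
        rw [hPeq, Real.norm_eq_abs] at htay
        refine le_trans htay ?_
        have hxL1 : 0 ≤ x + L := by have := hx.1; linarith
        have hxL2 : x + L ≤ 2 * L := by have := hx.2; linarith
        have hfact : (1 : ℝ) ≤ (n.factorial : ℝ) := by
          exact_mod_cast Nat.one_le_iff_ne_zero.mpr n.factorial_ne_zero
        calc D * (x - -L) ^ (n + 1) / (n.factorial : ℝ)
            ≤ D * (2 * L) ^ (n + 1) / (n.factorial : ℝ) := by
              rw [sub_neg_eq_add]
              gcongr
          _ ≤ D * (2 * L) ^ (n + 1) / 1 := by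
              gcongr
          _ = Cp * (2 * L) ^ (n + 1) * (α - L) ^ (p - ((n + 1 : ℕ) : ℝ)) := by
              rw [hD]; ring
  obtain ⟨P, hPcont, hPzero, hPbound⟩ := claim
  set K : ℝ := (∏ i ∈ Finset.range q, (|p| + i)) * (2 * L) ^ q with hK
  have hKnn : 0 ≤ K :=
    mul_nonneg (Finset.prod_nonneg fun i _ => by positivity) (by positivity)
  set M : ℝ := K * (α - L) ^ (p - q) with hM
  have hMnn : 0 ≤ M := mul_nonneg hKnn (Real.rpow_pos_of_pos haLpos _).le
  have hdiffmeas : AEStronglyMeasurable (fun h : ℝ => ((h + α) ^ p - P h) * Λ h) volume :=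
    (((by measurability : Measurable fun h : ℝ => (h + α) ^ p).sub
      hPcont.measurable).aestronglyMeasurable).mul hΛ.1
  have hdiffbound : ∀ h : ℝ, ‖((h + α) ^ p - P h) * Λ h‖ ≤ M * ‖Λ h‖ := by
    intro h
    by_cases hh : Λ h = 0
    · simp [hh]
    · rw [norm_mul]
      refine mul_le_mul_of_nonneg_right ?_ (norm_nonneg _)
      rw [Real.norm_eq_abs]
      exact hPbound h (hsupp hh)
  have hdiffint : Integrable (fun h : ℝ => ((h + α) ^ p - P h) * Λ h) :=
    (hΛ.norm.const_mul M).mono' hdiffmeas (Filter.Eventually.of_forall hdiffbound)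
  have hPint : Integrable (fun h : ℝ => P h * Λ h) := hintg P hPcont
  have hsplit : ∫ h : ℝ, (h + α) ^ p * Λ h
      = ∫ h : ℝ, ((h + α) ^ p - P h) * Λ h := by
    have heq : (fun h : ℝ => (h + α) ^ p * Λ h)
        = fun h => ((h + α) ^ p - P h) * Λ h + P h * Λ h := by
      funext h; ring
    rw [heq, integral_add hdiffint hPint, hPzero, add_zero]
  rw [hsplit]
  have hrw : (α - L) ^ (p - q) ≤ 2 ^ ((q : ℝ) - p) * α ^ (p - q) := by
    have hq : (0 : ℝ) ≤ (q : ℝ) := Nat.cast_nonneg q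
    have h1 : (α - L) ^ (p - q) ≤ (α / 2) ^ (p - q) :=
      Real.rpow_le_rpow_of_nonpos (by linarith) (by linarith) (by linarith)
    have h2 : (α / 2 : ℝ) ^ (p - (q : ℝ)) = 2 ^ ((q : ℝ) - p) * α ^ (p - q) := by
      rw [Real.div_rpow hαpos.le (by norm_num : (0 : ℝ) ≤ 2),
        show ((q : ℝ) - p) = -(p - q) by ring,
        Real.rpow_neg (by norm_num : (0 : ℝ) ≤ 2), div_eq_mul_inv, mul_comm]
    linarith
  have hInn : (0 : ℝ) ≤ ∫ h : ℝ, |Λ h| := integral_nonneg fun h => abs_nonneg _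
  calc |∫ h : ℝ, ((h + α) ^ p - P h) * Λ h|
      ≤ ∫ h : ℝ, ‖((h + α) ^ p - P h) * Λ h‖ := by
        rw [← Real.norm_eq_abs]; exact norm_integral_le_integral_norm _
    _ ≤ ∫ h : ℝ, M * ‖Λ h‖ :=
        integral_mono hdiffint.norm (hΛ.norm.const_mul M) hdiffbound
    _ = M * ∫ h : ℝ, |Λ h| := by
        rw [integral_const_mul]
        simp [Real.norm_eq_abs]
    _ ≤ (K * (2 ^ ((q : ℝ) - p) * α ^ (p - q))) * ∫ h : ℝ, |Λ h| := by
        refine mul_le_mul_of_nonneg_right ?_ hInn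
        rw [hM]
        exact mul_le_mul_of_nonneg_left hrw hKnn
    _ = (K * 2 ^ ((q : ℝ) - p)) * (∫ h : ℝ, |Λ h|) * α ^ (p - q) := by ring

/-- decay of the integral of the long-memory kernel against a compactly
supported function with `q` vanishing moments. -/
theorem stmt_8 (d : ℝ) (hd : d ∈ Set.Ioo (0 : ℝ) (1 / 2)) (L : ℝ) (hL : 0 < L) (q : ℕ)
    (Λ : ℝ → ℝ) (hΛ : Integrable Λ)
    (hsupp : Function.support Λ ⊆ Set.Icc (-L) L)
    (hmom : ∀ m : ℕ, m < q → ∫ h : ℝ, h ^ m * Λ h = 0) :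
    ∃ C : ℝ, 0 < C ∧ ∀ α : ℝ, 2 * L ≤ |α| →
      |∫ h : ℝ, |h + α| ^ (2 * d - 1) * Λ h| ≤ C * |α| ^ (2 * d - 1 - q) := by
  obtain ⟨hd0, hd1⟩ := hd
  set p : ℝ := 2 * d - 1 with hpdef
  have hp : p < 0 := by rw [hpdef]; linarith
  set K : ℝ := (∏ i ∈ Finset.range q, (|p| + i)) * (2 * L) ^ q * 2 ^ ((q : ℝ) - p) with hKdef
  have hKnn : 0 ≤ K :=
    mul_nonneg (mul_nonneg (Finset.prod_nonneg fun i _ => by positivity) (by positivity))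
      (by positivity)
  have hInn : (0 : ℝ) ≤ ∫ h : ℝ, |Λ h| := integral_nonneg fun h => abs_nonneg _
  refine ⟨K * (∫ h : ℝ, |Λ h|) + 1, by positivity, ?_⟩
  intro α hαabs
  have h2L : 0 < 2 * L := by linarith
  have key : |∫ h : ℝ, |h + α| ^ p * Λ h| ≤ K * (∫ h : ℝ, |Λ h|) * |α| ^ (p - q) := by
    rcases le_or_gt (2 * L) α with hcase | hcase
    · rw [abs_of_pos (lt_of_lt_of_le h2L hcase)]
      exact core_bound p L hp hL q Λ hΛ hsupp hmom α hcase
    · have hneg : 2 * L ≤ -α := by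
        rcases abs_cases α with ⟨h1, _⟩ | ⟨h1, _⟩
        · rw [h1] at hαabs; linarith
        · rw [h1] at hαabs; linarith
      have hαneg : α < 0 := by linarith
      rw [abs_of_neg hαneg]
      set Λ' : ℝ → ℝ := fun h => Λ (-h) with hΛ'def
      have hΛ' : Integrable Λ' := hΛ.comp_neg
      have hsupp' : Function.support Λ' ⊆ Set.Icc (-L) L := by
        intro h hh
        have hmem : -h ∈ Set.Icc (-L) L := hsupp hh
        exact ⟨by linarith [hmem.2], by linarith [hmem.1]⟩
      have hmom' : ∀ m : ℕ, m < q → ∫ h : ℝ, h ^ m * Λ' h = 0 := by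
        intro m hm
        have h1 : ∫ h : ℝ, ((-h) ^ m * Λ (-h)) = ∫ h : ℝ, h ^ m * Λ h :=
          integral_neg_eq_self (fun h => h ^ m * Λ h) volume
        have h2 : (fun h : ℝ => (-h) ^ m * Λ (-h))
            = fun h => (-1 : ℝ) ^ m * (h ^ m * Λ (-h)) := by
          funext h; rw [neg_pow]; ring
        rw [h2, integral_const_mul, hmom m hm] at h1
        exact (mul_eq_zero.mp h1).resolve_left (pow_ne_zero m (by norm_num))
      have hint_eq : ∫ h : ℝ, |h + α| ^ p * Λ h = ∫ h : ℝ, |h + -α| ^ p * Λ' h := by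
        rw [← integral_neg_eq_self (fun h : ℝ => |h + -α| ^ p * Λ' h) volume]
        congr 1
        funext h
        simp only [hΛ'def, neg_neg]
        rw [show -h + -α = -(h + α) by ring, abs_neg]
      have hnorm_eq : ∫ h : ℝ, |Λ' h| = ∫ h : ℝ, |Λ h| :=
        integral_neg_eq_self (fun h => |Λ h|) volume
      rw [hint_eq]
      have hcore := core_bound p L hp hL q Λ' hΛ' hsupp' hmom' (-α) hneg
      rwa [hnorm_eq] at hcore
  refine le_trans key ?_
  have hα0 : (0 : ℝ) ≤ |α| ^ (p - q) := Real.rpow_nonneg (abs_nonneg α) _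
  nlinarith
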